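/- The map θ is self-adjoint with respect to the bilinear form ( , ): for all u, v ∈ V one has (θ(u), v) = (u, θ(v)). -/

import Mathlib

noncomputable section
namespace SqPaper

/-- The two letters: `0 ↦ A`, `1 ↦ B`. -/
abbrev Ltr := Fin 2
def lA : Ltr := 0
def lB : Ltr := 1

/-- The pairing `⟨ , ⟩` on letters: `⟨A,A⟩=⟨B,B⟩=2`, `⟨A,B⟩=⟨B,A⟩=-2`. -/
def brk (x y : Ltr) : ℤ := if x = y then 2 else -2

variable (F : Type*) [Field F]

/-- The free algebra `V` on the two generators, realized as the monoid algebra of the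
free monoid on two letters; the words form the standard basis. -/
abbrev FA := MonoidAlgebra F (FreeMonoid Ltr)

/-- The standard basis vector attached to a word (list of letters). -/
def wd (l : List Ltr) : FA F := MonoidAlgebra.single (FreeMonoid.ofList l) 1

def Agen : FA F := wd F [lA]
def Bgen : FA F := wd F [lB]

/-- View an element of `V` as a finitely supported function on words. -/
def fsp (v : FA F) : FreeMonoid Ltr →₀ F := v.coeff

/-- The symmetric bilinear form on `V` for which the standard basis of words is orthonormal. -/
def form (u v : FA F) : F := (fsp F u).sum fun w c => c * (fsp F v) w

/-- Extend a function on words to an `F`-linear map on `V`. -/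
def mkMap {M : Type*} [AddCommMonoid M] [Module F M] (f : List Ltr → M) :
    FA F →ₗ[F] M :=
  Finsupp.lsum F (fun w => LinearMap.toSpanSingleton F M (f (FreeMonoid.toList w)))
    ∘ₗ (MonoidAlgebra.coeffLinearEquiv F).toLinearMap

/-- `[3]_q = (q³ - q⁻³)/(q - q⁻¹)`. -/
def tri (q : F) : F := (q ^ 3 - q⁻¹ ^ 3) / (q - q⁻¹)

/-- The q-shuffle product on words. -/
def shufW (q : F) : List Ltr → List Ltr → FA F
  | [], v => wd F v
  | u, [] => wd F u
  | a :: u, b :: v =>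
      wd F [a] * shufW q u (b :: v) +
        (q ^ (((a :: u).map (fun x => brk x b)).sum)) • (wd F [b] * shufW q (a :: u) v)
  termination_by u v => u.length + v.length

/-- The q-shuffle product `⋆` on `V`, as a bilinear map. -/
def qshuf (q : F) : FA F →ₗ[F] FA F →ₗ[F] FA F :=
  mkMap F fun u => mkMap F fun v => shufW F q u v

/-- Iterated `⋆`-product of the letters of a word. -/
def thetaW (q : F) : List Ltr → FA F
  | [] => 1
  | a :: t => qshuf F q (wd F [a]) (thetaW q t)

/-- `θ : V → V`, the algebra homomorphism from the free algebra to the q-shuffle algebra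
with `θ(A) = A`, `θ(B) = B`. -/
def theta (q : F) : FA F →ₗ[F] FA F := mkMap F fun l => thetaW F q l

/-- `A_L`, left multiplication by `A` in the free algebra. -/
def AL : FA F →ₗ[F] FA F := LinearMap.mulLeft F (Agen F)
def BL : FA F →ₗ[F] FA F := LinearMap.mulLeft F (Bgen F)
def AR : FA F →ₗ[F] FA F := LinearMap.mulRight F (Agen F)
def BR : FA F →ₗ[F] FA F := LinearMap.mulRight F (Bgen F)

/-- `X*_L` (for the letter `x`): deletes the letter `x` from the front of a word. -/
def delL (x : Ltr) : FA F →ₗ[F] FA F :=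
  mkMap F fun l => if l.head? = some x then wd F l.tail else 0

/-- `X*_R` (for the letter `x`): deletes the letter `x` from the end of a word. -/
def delR (x : Ltr) : FA F →ₗ[F] FA F :=
  mkMap F fun l => if l.getLast? = some x then wd F l.dropLast else 0

/-- `X_ℓ`: left q-shuffle multiplication by the letter `x`. -/
def shL (q : F) (x : Ltr) : FA F →ₗ[F] FA F := qshuf F q (wd F [x])

/-- `X_r`: right q-shuffle multiplication by the letter `x`. -/
def shR (q : F) (x : Ltr) : FA F →ₗ[F] FA F := (qshuf F q).flip (wd F [x])

/-- `X*_ℓ`: the weighted deletion map, deleting an occurrence of the letter `x`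
with weight `q^{⟨v₁,x⟩+⋯+⟨v_{i-1},x⟩}`. -/
def lowL (q : F) (x : Ltr) : FA F →ₗ[F] FA F :=
  mkMap F fun l =>
    ∑ i ∈ Finset.range l.length,
      if l[i]? = some x then
        (q ^ (((l.take i).map (fun y => brk y x)).sum)) • wd F (l.eraseIdx i)
      else 0

/-- `X*_r`: the weighted deletion map, deleting an occurrence of the letter `x`
with weight `q^{⟨vₙ,x⟩+⋯+⟨v_{i+1},x⟩}`. -/
def lowR (q : F) (x : Ltr) : FA F →ₗ[F] FA F :=
  mkMap F fun l =>
    ∑ i ∈ Finset.range l.length,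
      if l[i]? = some x then
        (q ^ (((l.drop (i + 1)).map (fun y => brk y x)).sum)) • wd F (l.eraseIdx i)
      else 0

/-- `K`, the algebra automorphism of the free algebra `V` with `K(A) = q²A`, `K(B) = q⁻²B`;
on a word `v = v₁⋯vₙ` it acts as `K(v) = v·q^{⟨v₁,A⟩+⋯+⟨vₙ,A⟩}`. -/
def Kop (q : F) : FA F →ₗ[F] FA F :=
  mkMap F fun l => (q ^ ((l.map (fun y => brk y lA)).sum)) • wd F l

/-- `K⁻¹`; on a word `v = v₁⋯vₙ` it acts as `K⁻¹(v) = v·q^{⟨v₁,B⟩+⋯+⟨vₙ,B⟩}`. -/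
def Kinv (q : F) : FA F →ₗ[F] FA F :=
  mkMap F fun l => (q ^ ((l.map (fun y => brk y lB)).sum)) • wd F l

/-- `T`, the automorphism of the free algebra swapping `A` and `B`. -/
def Top : FA F →ₗ[F] FA F :=
  mkMap F fun l => wd F (l.map (fun x => if x = lA then lB else lA))

/-- `Â = Q(A_L − K B_R)` and `B̂ = Q(B_L − K⁻¹ A_R)` where `Q = 1 - q²`. -/
def hatOp (q : F) (a : Ltr) : FA F →ₗ[F] FA F :=
  if a = lA then (1 - q ^ 2) • (AL F - Kop F q ∘ₗ BR F)
  else (1 - q ^ 2) • (BL F - Kinv F q ∘ₗ AR F)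

def phiW (q : F) : List Ltr → FA F
  | [] => 1
  | a :: t => hatOp F q a (phiW q t)

/-- The map `φ`: `φ(1) = 1` and `φ(v₁⋯vₙ) = v̂₁v̂₂⋯v̂ₙ(1)`. -/
def phi (q : F) : FA F →ₗ[F] FA F := mkMap F fun l => phiW F q l

/-- `ψ = K B_R A*_L + K⁻¹ A_R B*_L`. -/
def psi (q : F) : FA F →ₗ[F] FA F :=
  Kop F q ∘ₗ BR F ∘ₗ delL F lA + Kinv F q ∘ₗ AR F ∘ₗ delL F lB

/-- `V_n`, the span of the words of length `n`. -/
def Vn (n : ℕ) : Submodule F (FA F) :=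
  Submodule.span F { x | ∃ l : List Ltr, l.length = n ∧ x = wd F l }

/-- `J⁺ = A³B − [3]_q A²BA + [3]_q ABA² − BA³`. -/
def Jp (q : F) : FA F :=
  Agen F ^ 3 * Bgen F - tri F q • (Agen F ^ 2 * Bgen F * Agen F)
    + tri F q • (Agen F * Bgen F * Agen F ^ 2) - Bgen F * Agen F ^ 3

/-- `J⁻ = B³A − [3]_q B²AB + [3]_q BAB² − AB³`. -/
def Jm (q : F) : FA F :=
  Bgen F ^ 3 * Agen F - tri F q • (Bgen F ^ 2 * Agen F * Bgen F)
    + tri F q • (Bgen F * Agen F * Bgen F ^ 2) - Agen F * Bgen F ^ 3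

/-- `J`, the two-sided ideal of the free algebra generated by `J⁺` and `J⁻`
(realized as the `F`-span of the elements `a·J^±·b`). -/
def Jsub (q : F) : Submodule F (FA F) :=
  Submodule.span F { x | ∃ a b : FA F, x = a * Jp F q * b ∨ x = a * Jm F q * b }

/-- `U`, the subalgebra of the q-shuffle algebra `(V,⋆)` generated by `A` and `B`,
realized as the span of all `⋆`-products of the letters. -/
def Usub (q : F) : Submodule F (FA F) :=
  Submodule.span F (Set.range fun l : List Ltr => thetaW F q l)

/-- A `□_q`-module structure on an `F`-vector space `M`: four operators
`x₀, x₁, x₂, x₃` (indices mod 4) satisfying the q-Weyl and q-Serre relations. -/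
structure SqAct (q : F) (M : Type*) [AddCommGroup M] [Module F M] where
  x : ZMod 4 → Module.End F M
  weyl : ∀ i : ZMod 4,
    q • (x i * x (i + 1)) - q⁻¹ • (x (i + 1) * x i) = (q - q⁻¹) • (1 : Module.End F M)
  serre : ∀ i : ZMod 4,
    x i ^ 3 * x (i + 2) - tri F q • (x i ^ 2 * x (i + 2) * x i)
      + tri F q • (x i * x (i + 2) * x i ^ 2) - x (i + 2) * x i ^ 3 = 0

variable {F} {q : F} {M : Type*} [AddCommGroup M] [Module F M]

/-- A `□_q`-module `M` is generated by `ξ` if no proper submodule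
(subspace invariant under all the `xᵢ`) contains `ξ`. -/
def SqAct.Gen (S : SqAct F q M) (ξ : M) : Prop :=
  ∀ W : Submodule F M, (∀ i : ZMod 4, ∀ m ∈ W, S.x i m ∈ W) → ξ ∈ W → W = ⊤

/-- `W_n`: the span of the vectors `u₁u₂⋯uₙ·ξ` with each `uᵢ ∈ {x₀, x₂}`. -/
def SqAct.Wn (S : SqAct F q M) (ξ : M) (n : ℕ) : Submodule F M :=
  Submodule.span F
    { m | ∃ l : List (ZMod 4), l.length = n ∧ (∀ i ∈ l, i = 0 ∨ i = 2) ∧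
        m = l.foldr (fun i acc => S.x i acc) ξ }


section Aux
open SqPaper

variable {F : Type*} [Field F] {q : F}

lemma brk_comm (x y : Ltr) : brk x y = brk y x := by
  unfold brk
  by_cases h : x = y <;> simp [h, eq_comm]

lemma wd_mul (l m : List Ltr) : wd F l * wd F m = wd F (l ++ m) := by
  simp [wd, MonoidAlgebra.single_mul_single, FreeMonoid.ofList_append]

lemma mkMap_single {M : Type*} [AddCommMonoid M] [Module F M] (f : List Ltr → M)
    (a : FreeMonoid Ltr) (b : F) :
    mkMap F f (MonoidAlgebra.single a b) = b • f a.toList := by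
  unfold mkMap
  rw [LinearMap.comp_apply]
  erw [Finsupp.lsum_single (S := F)]
  rfl

lemma mkMap_wd {M : Type*} [AddCommMonoid M] [Module F M] (f : List Ltr → M)
    (l : List Ltr) : mkMap F f (wd F l) = f l := by
  rw [wd, mkMap_single, FreeMonoid.toList_ofList, one_smul]

lemma single_eq_smul_wd (a : FreeMonoid Ltr) (b : F) :
    (MonoidAlgebra.single a b : FA F) = b • wd F a.toList := by
  rw [wd, FreeMonoid.ofList_toList, MonoidAlgebra.smul_single', mul_one]

lemma eq_on_words {N : Type*} [AddCommMonoid N] [Module F N]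
    (f g : FA F →ₗ[F] N) (h : ∀ l : List Ltr, f (wd F l) = g (wd F l)) (u : FA F) :
    f u = g u := by
  induction u using MonoidAlgebra.induction_linear with
  | zero => simp
  | add a b ha hb =>
      show f (a + b) = g (a + b)
      rw [map_add, map_add, ha, hb]
  | single a b =>
      show f (MonoidAlgebra.single a b) = g (MonoidAlgebra.single a b)
      rw [single_eq_smul_wd, map_smul, map_smul, h]

/-! ### Bilinearity of the form -/

lemma form_wd_wd (l m : List Ltr) :
    form F (wd F l) (wd F m) = if l = m then 1 else 0 := by
  unfold form fsp wd
  classical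
  simp only [MonoidAlgebra.coeff_single]
  rw [Finsupp.sum_single_index (by simp)]
  rw [one_mul, Finsupp.single_apply]
  simp only [EmbeddingLike.apply_eq_iff_eq]
  exact if_congr eq_comm rfl rfl

lemma form_zero_left (v : FA F) : form F 0 v = 0 := by
  unfold form fsp
  exact Finsupp.sum_zero_index

lemma form_zero_right (u : FA F) : form F u 0 = 0 := by
  unfold form fsp
  simp

lemma form_add_left (u1 u2 v : FA F) :
    form F (u1 + u2) v = form F u1 v + form F u2 v := by
  unfold form fsp
  exact Finsupp.sum_add_index' (fun w => zero_mul _) (fun w b1 b2 => add_mul _ _ _)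

lemma form_smul_left (c : F) (u v : FA F) : form F (c • u) v = c * form F u v := by
  have h : fsp F (c • u) = c • fsp F u := rfl
  unfold form
  rw [h, Finsupp.sum_smul_index (fun i => zero_mul ((fsp F v) i)), Finsupp.mul_sum]
  exact Finsupp.sum_congr fun w _ => mul_assoc c _ _

lemma form_add_right (u v1 v2 : FA F) :
    form F u (v1 + v2) = form F u v1 + form F u v2 := by
  unfold form fsp
  rw [← Finsupp.sum_add]
  exact Finsupp.sum_congr fun w _ => by
    show _ * ((v1 + v2).coeff w) = _
    rw [MonoidAlgebra.coeff_add, Finsupp.add_apply, mul_add]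

lemma form_smul_right (c : F) (u v : FA F) : form F u (c • v) = c * form F u v := by
  unfold form fsp
  rw [Finsupp.mul_sum]
  exact Finsupp.sum_congr fun w _ => by
    show _ * ((c • v).coeff w) = _
    rw [MonoidAlgebra.coeff_smul, Finsupp.smul_apply, smul_eq_mul]
    ring

lemma form_sum_left {I : Type*} (s : Finset I) (f : I → FA F) (v : FA F) :
    form F (∑ i ∈ s, f i) v = ∑ i ∈ s, form F (f i) v := by
  induction s using Finset.cons_induction with
  | empty => simp [form_zero_left]
  | cons a s ha ih => rw [Finset.sum_cons, Finset.sum_cons, form_add_left, ih]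

lemma form_sum_right {I : Type*} (s : Finset I) (u : FA F) (f : I → FA F) :
    form F u (∑ i ∈ s, f i) = ∑ i ∈ s, form F u (f i) := by
  induction s using Finset.cons_induction with
  | empty => simp [form_zero_right]
  | cons a s ha ih => rw [Finset.sum_cons, Finset.sum_cons, form_add_right, ih]

end Aux

section Aux2
open SqPaper
variable {F : Type*} [Field F] {q : F}

lemma shufW_nil_left (v : List Ltr) : shufW F q [] v = wd F v := by
  cases v <;> simp [shufW]

lemma shufW_nil_right (u : List Ltr) : shufW F q u [] = wd F u := by
  cases u <;> simp [shufW]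

lemma shufW_cons_cons (a b : Ltr) (u v : List Ltr) :
    shufW F q (a :: u) (b :: v) =
      wd F [a] * shufW F q u (b :: v) +
        (q ^ (((a :: u).map (fun x => brk x b)).sum)) • (wd F [b] * shufW F q (a :: u) v) := by
  rw [shufW]

end Aux2
section Aux3
open SqPaper
variable {F : Type*} [Field F] {q : F}

lemma shufW_singleton (hq : q ≠ 0) (x : Ltr) (u : List Ltr) :
    shufW F q [x] u = ∑ i ∈ Finset.range (u.length + 1),
      (q ^ (((u.take i).map fun y => brk x y).sum)) • wd F (u.insertIdx i x) := by
  induction u with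
  | nil => simp [shufW_nil_right]
  | cons b v ih =>
    rw [shufW_cons_cons, shufW_nil_left, wd_mul, ih, Finset.mul_sum, Finset.smul_sum]
    conv_rhs => rw [List.length_cons, Finset.sum_range_succ']
    simp only [List.map_cons, List.map_nil, List.sum_cons, List.sum_nil, add_zero,
      List.singleton_append, List.take_succ_cons, List.insertIdx_succ_cons,
      List.insertIdx_zero, List.take_zero, zpow_zero, one_smul]
    rw [add_comm]
    congr 1
    refine Finset.sum_congr rfl fun i hi => ?_
    rw [mul_smul_comm, smul_smul, wd_mul, List.singleton_append, ← zpow_add₀ hq]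

end Aux3
section Aux4
open SqPaper
variable {F : Type*} [Field F] {q : F}

lemma take_insertIdx (x : Ltr) : ∀ (u : List Ltr) (i : ℕ), i ≤ u.length →
    (u.insertIdx i x).take i = u.take i
  | _, 0, _ => by simp
  | a :: u, i + 1, h => by
      rw [List.insertIdx_succ_cons, List.take_succ_cons, List.take_succ_cons,
        take_insertIdx x u i (Nat.le_of_succ_le_succ h)]
  | [], i + 1, h => by simp at h

lemma insertIdx_getElem_eraseIdx : ∀ (v : List Ltr) (i : ℕ) (h : i < v.length),
    (v.eraseIdx i).insertIdx i v[i] = v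
  | a :: t, 0, _ => by simp
  | a :: t, i + 1, h => by
      simp only [List.eraseIdx_cons_succ, List.insertIdx_succ_cons, List.getElem_cons_succ]
      rw [insertIdx_getElem_eraseIdx t i (by simpa using h)]
  | [], i, h => by simp at h

lemma qshuf_wd (u v : List Ltr) : qshuf F q (wd F u) (wd F v) = shufW F q u v := by
  unfold qshuf
  rw [mkMap_wd, mkMap_wd]

lemma shL_wd (x : Ltr) (l : List Ltr) : shL F q x (wd F l) = shufW F q [x] l := by
  unfold shL
  rw [qshuf_wd]

lemma theta_wd (l : List Ltr) : theta F q (wd F l) = thetaW F q l := by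
  unfold theta
  rw [mkMap_wd]

lemma delL_wd (x : Ltr) (l : List Ltr) :
    delL F x (wd F l) = if l.head? = some x then wd F l.tail else 0 := by
  unfold delL
  rw [mkMap_wd]

lemma lowL_wd (x : Ltr) (l : List Ltr) :
    lowL F q x (wd F l) = ∑ i ∈ Finset.range l.length,
      if l[i]? = some x then
        (q ^ (((l.take i).map (fun y => brk y x)).sum)) • wd F (l.eraseIdx i)
      else 0 := by
  unfold lowL
  rw [mkMap_wd]

lemma form_shL_wd (hq : q ≠ 0) (x : Ltr) (u v : List Ltr) :
    form F (shL F q x (wd F u)) (wd F v) = form F (wd F u) (lowL F q x (wd F v)) := by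
  rw [shL_wd, shufW_singleton hq, lowL_wd, form_sum_left, form_sum_right]
  by_cases h : v.length = u.length + 1
  · rw [h]
    refine Finset.sum_congr rfl fun i hi => ?_
    rw [Finset.mem_range] at hi
    have hiu : i ≤ u.length := Nat.lt_succ_iff.mp hi
    have hiv : i < v.length := by omega
    rw [form_smul_left, form_wd_wd, List.getElem?_eq_getElem hiv]
    by_cases hins : u.insertIdx i x = v
    · subst hins
      have hx : (u.insertIdx i x)[i]'hiv = x := List.getElem_insertIdx_self hiv
      rw [if_pos rfl, if_pos (by rw [hx]), form_smul_right, form_wd_wd,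
        if_pos (List.eraseIdx_insertIdx_self (i := i) (l := u) x).symm, take_insertIdx x u i hiu]
      simp [brk_comm]
    · rw [if_neg hins, mul_zero]
      by_cases hx : v[i] = x
      · rw [if_pos (by rw [hx]), form_smul_right, form_wd_wd, if_neg, mul_zero]
        intro hu
        apply hins
        rw [hu, ← hx, insertIdx_getElem_eraseIdx v i hiv]
      · rw [if_neg (by simpa using hx), form_zero_right]
  · rw [Finset.sum_eq_zero, Finset.sum_eq_zero]
    · intro i hi
      rw [Finset.mem_range] at hi
      by_cases hx : v[i]? = some x
      · rw [if_pos hx, form_smul_right, form_wd_wd, if_neg, mul_zero]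
        intro hu
        apply h
        have := List.length_eraseIdx_of_lt hi
        rw [← hu] at this
        omega
      · rw [if_neg hx, form_zero_right]
    · intro i hi
      rw [Finset.mem_range, Nat.lt_succ_iff] at hi
      rw [form_smul_left, form_wd_wd, if_neg, mul_zero]
      intro hins
      apply h
      rw [← hins, List.length_insertIdx, if_pos hi]

end Aux4
section Aux5
open SqPaper
variable {F : Type*} [Field F] {q : F}

lemma form_shL (hq : q ≠ 0) (x : Ltr) (u v : FA F) :
    form F (shL F q x u) v = form F u (lowL F q x v) := by
  induction v using MonoidAlgebra.induction_linear with
  | zero =>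
      show form F _ (0 : FA F) = form F u (lowL F q x (0 : FA F))
      rw [map_zero, form_zero_right, form_zero_right]
  | add v1 v2 h1 h2 =>
      show form F _ (v1 + v2) = form F u (lowL F q x (v1 + v2))
      rw [map_add, form_add_right, form_add_right, h1, h2]
  | single a b =>
      show form F _ (MonoidAlgebra.single a b) = form F u (lowL F q x (MonoidAlgebra.single a b))
      rw [single_eq_smul_wd, map_smul, form_smul_right, form_smul_right]
      congr 1
      induction u using MonoidAlgebra.induction_linear with
      | zero =>
          show form F (shL F q x (0 : FA F)) _ = form F (0 : FA F) _
          rw [map_zero, form_zero_left, form_zero_left]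
      | add u1 u2 h1 h2 =>
          show form F (shL F q x (u1 + u2)) _ = form F (u1 + u2) _
          rw [map_add, form_add_left, form_add_left, h1, h2]
      | single c d =>
          show form F (shL F q x (MonoidAlgebra.single c d)) _
            = form F (MonoidAlgebra.single c d) _
          rw [single_eq_smul_wd, map_smul, form_smul_left, form_smul_left,
            form_shL_wd hq]

lemma delL_single_mul (x b : Ltr) (z : FA F) :
    delL F x (wd F [b] * z) = if b = x then z else 0 := by
  induction z using MonoidAlgebra.induction_linear with
  | zero =>
      show delL F x (wd F [b] * (0 : FA F)) = _
      rw [mul_zero, map_zero]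
      simp
  | add z1 z2 h1 h2 =>
      rw [mul_add, map_add, h1, h2]
      by_cases hb : b = x <;> simp [hb]
  | single a c =>
      show delL F x (wd F [b] * MonoidAlgebra.single a c) = _
      rw [single_eq_smul_wd, mul_smul_comm, map_smul, wd_mul, delL_wd]
      by_cases hb : b = x <;> simp [hb, single_eq_smul_wd]

end Aux5
section Aux6
open SqPaper
variable {F : Type*} [Field F] {q : F}

lemma wd_nil : (wd F [] : FA F) = 1 := rfl

lemma thetaW_nil : thetaW F q [] = (1 : FA F) := rfl

lemma thetaW_cons (b : Ltr) (t : List Ltr) :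
    thetaW F q (b :: t) = shL F q b (thetaW F q t) := rfl

lemma delL_shL_wd (x y : Ltr) (l : List Ltr) :
    delL F x (shL F q y (wd F l)) =
      (if x = y then wd F l else 0) + (q ^ (brk y x)) • shL F q y (delL F x (wd F l)) := by
  cases l with
  | nil =>
      rw [shL_wd, shufW_nil_right, delL_wd, delL_wd]
      simp only [List.head?_cons, List.head?_nil, reduceCtorEq, if_false, map_zero, smul_zero,
        add_zero, List.tail_cons, Option.some.injEq]
      exact if_congr eq_comm rfl rfl
  | cons b t =>
      rw [shL_wd, shufW_cons_cons, shufW_nil_left, wd_mul, List.singleton_append, map_add,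
        map_smul, delL_wd, delL_single_mul, delL_wd]
      simp only [List.head?_cons, List.tail_cons, Option.some.injEq]
      by_cases hby : b = x
      · by_cases hxy : x = y <;> simp [hby, hxy, eq_comm, shL_wd]
      · have hxb : ¬x = b := fun h => hby h.symm
        by_cases hxy : x = y
        · subst hxy
          simp [hxb, hby, shL_wd]
        · have hyx : ¬y = x := fun h => hxy h.symm
          simp [hxb, hby, hxy, hyx, shL_wd]

end Aux6
section Aux7
open SqPaper
variable {F : Type*} [Field F] {q : F}

lemma single_eq_smul_wd' (a : FreeMonoid Ltr) (b : F) :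
    (MonoidAlgebra.single a b : FA F) = b • wd F a.toList := single_eq_smul_wd a b

lemma delL_shL (x y : Ltr) (w : FA F) :
    delL F x (shL F q y w) =
      (if x = y then w else 0) + (q ^ (brk y x)) • shL F q y (delL F x w) := by
  induction w using MonoidAlgebra.induction_linear with
  | zero => simp
  | add w1 w2 h1 h2 =>
      rw [map_add, map_add, h1, h2, map_add, map_add, smul_add]
      by_cases hxy : x = y <;> simp [hxy] <;> abel
  | single a c =>
      rw [single_eq_smul_wd', map_smul, map_smul, delL_shL_wd, map_smul, map_smul, smul_add,
        smul_comm c]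
      by_cases hxy : x = y <;> simp [hxy]

lemma lowL_cons (hq : q ≠ 0) (x b : Ltr) (t : List Ltr) :
    lowL F q x (wd F (b :: t)) =
      (if b = x then wd F t else 0) +
        (q ^ (brk b x)) • (wd F [b] * lowL F q x (wd F t)) := by
  rw [lowL_wd, lowL_wd, List.length_cons, Finset.sum_range_succ', Finset.mul_sum,
    Finset.smul_sum, add_comm]
  congr 1
  · simp only [List.getElem?_cons_zero, Option.some.injEq, List.take_zero, List.map_nil,
      List.sum_nil, zpow_zero, one_smul, List.eraseIdx_cons_zero]
  · refine Finset.sum_congr rfl fun i hi => ?_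
    simp only [List.getElem?_cons_succ, List.take_succ_cons, List.map_cons, List.sum_cons,
      List.eraseIdx_cons_succ]
    by_cases h : t[i]? = some x
    · rw [if_pos h, if_pos h, mul_smul_comm, smul_smul, wd_mul, List.singleton_append,
        ← zpow_add₀ hq]
    · rw [if_neg h, if_neg h, mul_zero, smul_zero]

lemma theta_single_mul (b : Ltr) (z : FA F) :
    theta F q (wd F [b] * z) = shL F q b (theta F q z) := by
  induction z using MonoidAlgebra.induction_linear with
  | zero => simp
  | add z1 z2 h1 h2 => rw [mul_add, map_add, h1, h2, map_add, map_add]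
  | single a c =>
      rw [single_eq_smul_wd', mul_smul_comm, map_smul, map_smul, map_smul, wd_mul,
        List.singleton_append, theta_wd, theta_wd, thetaW_cons]

lemma delL_theta (hq : q ≠ 0) (x : Ltr) (v : FA F) :
    delL F x (theta F q v) = theta F q (lowL F q x v) := by
  induction v using MonoidAlgebra.induction_linear with
  | zero => rw [map_zero, map_zero, map_zero, map_zero]
  | add v1 v2 h1 h2 => rw [map_add, map_add, h1, h2, map_add, map_add]
  | single a c =>
      rw [single_eq_smul_wd', map_smul, map_smul, map_smul, map_smul]
      congr 1
      generalize a.toList = l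
      induction l with
      | nil =>
          rw [theta_wd, thetaW_nil, ← wd_nil, delL_wd, lowL_wd]
          simp
      | cons b t ih =>
          rw [theta_wd, thetaW_cons, ← theta_wd, delL_shL, ih, lowL_cons hq, map_add,
            map_smul, theta_single_mul, theta_wd]
          congr 1
          by_cases hbx : b = x
          · rw [if_pos hbx, if_pos hbx.symm, theta_wd]
          · rw [if_neg hbx, if_neg (fun h => hbx h.symm), map_zero]

end Aux7
section Aux8
open SqPaper
variable {F : Type*} [Field F] {q : F}

lemma form_cons (a : Ltr) (t : List Ltr) (w : FA F) :
    form F (wd F (a :: t)) w = form F (wd F t) (delL F a w) := by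
  induction w using MonoidAlgebra.induction_linear with
  | zero => rw [map_zero, form_zero_right, form_zero_right]
  | add w1 w2 h1 h2 => rw [map_add, form_add_right, form_add_right, h1, h2]
  | single m c =>
      rw [single_eq_smul_wd', map_smul, form_smul_right, form_smul_right]
      congr 1
      rw [delL_wd, form_wd_wd]
      cases hm : m.toList with
      | nil => simp [form_zero_right]
      | cons b m' =>
          simp only [List.head?_cons, List.tail_cons, Option.some.injEq]
          by_cases hb : b = a
          · subst hb
            rw [if_pos rfl, form_wd_wd]
            simp
          · rw [if_neg hb, if_neg (by simp [Ne.symm hb]), form_zero_right]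

lemma form_nil_single_mul (c : Ltr) (z : FA F) :
    form F (wd F []) (wd F [c] * z) = 0 := by
  induction z using MonoidAlgebra.induction_linear with
  | zero => rw [mul_zero, form_zero_right]
  | add z1 z2 h1 h2 => rw [mul_add, form_add_right, h1, h2, add_zero]
  | single m d =>
      rw [single_eq_smul_wd', mul_smul_comm, form_smul_right, wd_mul, List.singleton_append,
        form_wd_wd, if_neg (by simp), mul_zero]

lemma form_nil_shL (x : Ltr) (w : FA F) : form F (wd F []) (shL F q x w) = 0 := by
  induction w using MonoidAlgebra.induction_linear with
  | zero => rw [map_zero, form_zero_right]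
  | add w1 w2 h1 h2 => rw [map_add, form_add_right, h1, h2, add_zero]
  | single m d =>
      rw [single_eq_smul_wd', map_smul, form_smul_right]
      cases hm : m.toList with
      | nil =>
          rw [shL_wd, shufW_nil_right, form_wd_wd, if_neg (by simp), mul_zero]
      | cons b t =>
          rw [shL_wd, shufW_cons_cons, shufW_nil_left, wd_mul, List.singleton_append,
            form_add_right, form_wd_wd, if_neg (by simp), form_smul_right,
            form_nil_single_mul]
          ring

lemma form_nil_theta (v : FA F) :
    form F (wd F []) (theta F q v) = form F (wd F []) v := by
  induction v using MonoidAlgebra.induction_linear with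
  | zero => rw [map_zero]
  | add v1 v2 h1 h2 => rw [map_add, form_add_right, form_add_right, h1, h2]
  | single m c =>
      rw [single_eq_smul_wd', map_smul, form_smul_right, form_smul_right]
      congr 1
      cases hm : m.toList with
      | nil => rw [theta_wd, thetaW_nil, ← wd_nil]
      | cons b t =>
          rw [theta_wd, thetaW_cons, form_nil_shL, form_wd_wd, if_neg (by simp)]

lemma theta_selfAdjoint_aux (hq : q ≠ 0) :
    ∀ u v : FA F, form F (theta F q u) v = form F u (theta F q v) := by
  have main_wd : ∀ (l : List Ltr) (v : FA F),
      form F (theta F q (wd F l)) v = form F (wd F l) (theta F q v) := by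
    intro l
    induction l with
    | nil =>
        intro v
        rw [theta_wd, thetaW_nil, ← wd_nil, form_nil_theta]
    | cons a t ih =>
        intro v
        rw [theta_wd, thetaW_cons, ← theta_wd, form_shL hq, ih, ← delL_theta hq,
          ← form_cons]
  intro u v
  induction u using MonoidAlgebra.induction_linear with
  | zero => rw [map_zero, form_zero_left, form_zero_left]
  | add u1 u2 h1 h2 => rw [map_add, form_add_left, form_add_left, h1, h2]
  | single a b =>
      rw [single_eq_smul_wd', map_smul, form_smul_left, form_smul_left, main_wd]

end Aux8

end SqPaper
open SqPaper in
/-- `θ` is self-adjoint with respect to the bilinear form `( , )`. -/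
theorem theta_selfAdjoint (F : Type*) [Field F] (q : F) (hq : q ≠ 0)
    (hq1 : ∀ k : ℕ, 0 < k → q ^ k ≠ 1) :
    ∀ u v : FA F, form F (theta F q u) v = form F u (theta F q v) := by
  exact SqPaper.theta_selfAdjoint_aux hq
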